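/- Let E : ℝ → ℝ be twice continuously differentiable, let φ : ℝ² → ℝ be twice continuously differentiable, and let v₊, v₋ : ℝ² → ℝ be continuously differentiable, such that the equations of motion ∂₊∂₋φ + ∂₋v₊ + ∂₊v₋ = 0, (1+E′(v₊v₋))v₋ + ∂₋φ = 0, and (1+E′(v₊v₋))v₊ + ∂₊φ = 0 hold everywhere on ℝ². Write ν := v₊v₋ and define T₊₊ = (E′(ν)² − 1)v₊², T₋₋ = (E′(ν)² − 1)v₋², and T₊₋ = 2(E′(ν)ν − E(ν)). Then ∂₋T₊₊ + ∂₊T₊₋ = 0 and ∂₊T₋₋ + ∂₋T₊₋ = 0 everywhere on ℝ². -/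

import Mathlib

/-- Light-cone partial derivative `∂₊` on the worldsheet `ℝ²`. -/
noncomputable def dplus (h : ℝ × ℝ → ℝ) (p : ℝ × ℝ) : ℝ := fderiv ℝ h p (1, 0)

/-- Light-cone partial derivative `∂₋` on the worldsheet `ℝ²`. -/
noncomputable def dminus (h : ℝ × ℝ → ℝ) (p : ℝ × ℝ) : ℝ := fderiv ℝ h p (0, 1)

open ContinuousLinearMap in
theorem aux_conserv (E : ℝ → ℝ) (hE : ContDiff ℝ 2 E)
    (φ : ℝ × ℝ → ℝ) (hφ : ContDiff ℝ 2 φ)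
    (vp vm : ℝ × ℝ → ℝ) (hvp : ContDiff ℝ 1 vp) (hvm : ContDiff ℝ 1 vm)
    (u w : ℝ × ℝ)
    (heom1 : ∀ p : ℝ × ℝ, fderiv ℝ (fun q => fderiv ℝ φ q w) p u
      + fderiv ℝ vp p w + fderiv ℝ vm p u = 0)
    (heom2 : ∀ p : ℝ × ℝ, (1 + deriv E (vp p * vm p)) * vm p + fderiv ℝ φ p w = 0)
    (heom3 : ∀ p : ℝ × ℝ, (1 + deriv E (vp p * vm p)) * vp p + fderiv ℝ φ p u = 0)
    (p : ℝ × ℝ) :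
    fderiv ℝ (fun q => ((deriv E (vp q * vm q)) ^ 2 - 1) * vp q ^ 2) p w
      + fderiv ℝ (fun q => 2 * (deriv E (vp q * vm q) * (vp q * vm q)
        - E (vp q * vm q))) p u = 0 := by
  -- basic differentiability
  have hvp' : HasFDerivAt vp (fderiv ℝ vp p) p :=
    (hvp.differentiable one_ne_zero p).hasFDerivAt
  have hvm' : HasFDerivAt vm (fderiv ℝ vm p) p :=
    (hvm.differentiable one_ne_zero p).hasFDerivAt
  set Dvp := fderiv ℝ vp p with hDvp
  set Dvm := fderiv ℝ vm p with hDvm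
  have hν : HasFDerivAt (fun q => vp q * vm q) (vp p • Dvm + vm p • Dvp) p :=
    hvp'.mul hvm'
  set Dν := vp p • Dvm + vm p • Dvp with hDν
  -- deriv E is C¹
  have hE1 : ContDiff ℝ 1 (deriv E) := by
    have h2 : ContDiff ℝ (1 + 1 : ℕ) E := by exact_mod_cast hE
    exact (contDiff_succ_iff_deriv.mp h2).2.2
  set g := deriv E (vp p * vm p) with hgdef
  set G := deriv (deriv E) (vp p * vm p) with hGdef
  have hG : HasDerivAt (deriv E) G (vp p * vm p) :=
    (hE1.differentiable one_ne_zero _).hasDerivAt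
  have hg : HasFDerivAt (fun q => deriv E (vp q * vm q)) (G • Dν) p :=
    by have := hG.comp_hasFDerivAt p hν; exact this
  have hEν : HasFDerivAt (fun q => E (vp q * vm q)) (g • Dν) p :=
    ((hE.differentiable (by norm_num) _).hasDerivAt).comp_hasFDerivAt p hν
  -- second derivative of φ
  have hDφ : ContDiff ℝ 1 (fun q => fderiv ℝ φ q) := hφ.fderiv_right (by norm_num)
  have hH : HasFDerivAt (fun q => fderiv ℝ φ q)
      (fderiv ℝ (fun q => fderiv ℝ φ q) p) p :=
    (hDφ.differentiable one_ne_zero p).hasFDerivAt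
  set H := fderiv ℝ (fun q => fderiv ℝ φ q) p with hHdef
  have hφw : HasFDerivAt (fun q => fderiv ℝ φ q w)
      ((ContinuousLinearMap.apply ℝ ℝ w).comp H) p :=
    (ContinuousLinearMap.apply ℝ ℝ w).hasFDerivAt.comp p hH
  have hφu : HasFDerivAt (fun q => fderiv ℝ φ q u)
      ((ContinuousLinearMap.apply ℝ ℝ u).comp H) p :=
    (ContinuousLinearMap.apply ℝ ℝ u).hasFDerivAt.comp p hH
  have hsymm : H w u = H u w :=
    second_derivative_symmetric
      (fun q => (hφ.differentiable (by norm_num) q).hasFDerivAt) hH w u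
  -- eom1 at p, in terms of H
  have h1 : H u w + Dvp w + Dvm u = 0 := by
    have := heom1 p
    rwa [hφw.fderiv] at this
  -- differentiated eom3
  have hA : (1 + g) * Dvp w + vp p * (G * Dν w) + H w u = 0 := by
    have hF : HasFDerivAt (fun q => (1 + deriv E (vp q * vm q)) * vp q + fderiv ℝ φ q u)
        (((1 + g) • Dvp + vp p • (G • Dν)) + (ContinuousLinearMap.apply ℝ ℝ u).comp H) p :=
      ((hg.const_add 1).mul hvp').add hφu
    have hzero : HasFDerivAt (fun q => (1 + deriv E (vp q * vm q)) * vp q + fderiv ℝ φ q u)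
        (0 : ℝ × ℝ →L[ℝ] ℝ) p := by
      have hfun : (fun q => (1 + deriv E (vp q * vm q)) * vp q + fderiv ℝ φ q u)
          = fun _ => (0 : ℝ) := funext heom3
      rw [hfun]; exact hasFDerivAt_const 0 p
    have := hF.unique hzero
    have hw := congrArg (fun (L : ℝ × ℝ →L[ℝ] ℝ) => L w) this
    simpa [ContinuousLinearMap.add_apply, ContinuousLinearMap.smul_apply, smul_eq_mul,
      ContinuousLinearMap.comp_apply, ContinuousLinearMap.apply_apply] using hw
  -- differentiated eom2
  have hB : (1 + g) * Dvm u + vm p * (G * Dν u) + H u w = 0 := by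
    have hF : HasFDerivAt (fun q => (1 + deriv E (vp q * vm q)) * vm q + fderiv ℝ φ q w)
        (((1 + g) • Dvm + vm p • (G • Dν)) + (ContinuousLinearMap.apply ℝ ℝ w).comp H) p :=
      ((hg.const_add 1).mul hvm').add hφw
    have hzero : HasFDerivAt (fun q => (1 + deriv E (vp q * vm q)) * vm q + fderiv ℝ φ q w)
        (0 : ℝ × ℝ →L[ℝ] ℝ) p := by
      have hfun : (fun q => (1 + deriv E (vp q * vm q)) * vm q + fderiv ℝ φ q w)
          = fun _ => (0 : ℝ) := funext heom2
      rw [hfun]; exact hasFDerivAt_const 0 p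
    have := hF.unique hzero
    have hu := congrArg (fun (L : ℝ × ℝ →L[ℝ] ℝ) => L u) this
    simpa [ContinuousLinearMap.add_apply, ContinuousLinearMap.smul_apply, smul_eq_mul,
      ContinuousLinearMap.comp_apply, ContinuousLinearMap.apply_apply] using hu
  -- compute fderiv of Tpp-like term
  have hT1 : fderiv ℝ (fun q => ((deriv E (vp q * vm q)) ^ 2 - 1) * vp q ^ 2) p w
      = (g * g - 1) * (vp p * Dvp w + vp p * Dvp w)
        + (vp p * vp p) * (g * (G * Dν w) + g * (G * Dν w)) := by
    have hfun : (fun q => ((deriv E (vp q * vm q)) ^ 2 - 1) * vp q ^ 2)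
        = fun q => (deriv E (vp q * vm q) * deriv E (vp q * vm q) - 1) * (vp q * vp q) := by
      funext q; ring
    rw [hfun]
    have hF : HasFDerivAt
        (fun q => (deriv E (vp q * vm q) * deriv E (vp q * vm q) - 1) * (vp q * vp q))
        ((g * g - 1) • (vp p • Dvp + vp p • Dvp)
          + (vp p * vp p) • (g • (G • Dν) + g • (G • Dν))) p :=
      ((hg.mul hg).sub_const 1).mul (hvp'.mul hvp')
    rw [hF.fderiv]
    simp [ContinuousLinearMap.add_apply, ContinuousLinearMap.smul_apply, smul_eq_mul]
    ring
  -- compute fderiv of Tpm-like term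
  have hT2 : fderiv ℝ (fun q => 2 * (deriv E (vp q * vm q) * (vp q * vm q)
        - E (vp q * vm q))) p u
      = 2 * ((g * Dν u + (vp p * vm p) * (G * Dν u)) - g * Dν u) := by
    have hF : HasFDerivAt (fun q => 2 * (deriv E (vp q * vm q) * (vp q * vm q)
          - E (vp q * vm q)))
        ((2 : ℝ) • ((g • Dν + (vp p * vm p) • (G • Dν)) - g • Dν)) p :=
      ((hg.mul hν).sub hEν).const_mul 2
    rw [hF.fderiv]
    simp [ContinuousLinearMap.add_apply, ContinuousLinearMap.smul_apply, smul_eq_mul]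
  -- evaluate Dν
  have hDνw : Dν w = vp p * Dvm w + vm p * Dvp w := by
    simp [hDν, ContinuousLinearMap.add_apply, ContinuousLinearMap.smul_apply, smul_eq_mul]
  have hDνu : Dν u = vp p * Dvm u + vm p * Dvp u := by
    simp [hDν, ContinuousLinearMap.add_apply, ContinuousLinearMap.smul_apply, smul_eq_mul]
  rw [hT1, hT2, hDνw, hDνu]
  rw [hsymm] at hA
  rw [hDνw] at hA
  rw [hDνu] at hB
  linear_combination (2 * g * vp p) * hA + (2 * vp p) * hB
    - (2 * vp p * (g + 1)) * h1

/-- On-shell conservation of the energy–momentum tensor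
`T±± = (E′(ν)² − 1)v±²`, `T₊₋ = 2(E′(ν)ν − E(ν))` of the auxiliary-field
deformation of a single free boson. -/
theorem stmt13 (E : ℝ → ℝ) (hE : ContDiff ℝ 2 E)
    (φ : ℝ × ℝ → ℝ) (hφ : ContDiff ℝ 2 φ)
    (vp vm : ℝ × ℝ → ℝ) (hvp : ContDiff ℝ 1 vp) (hvm : ContDiff ℝ 1 vm)
    (heom1 : ∀ p : ℝ × ℝ,
      dplus (fun q => dminus φ q) p + dminus vp p + dplus vm p = 0)
    (heom2 : ∀ p : ℝ × ℝ,
      (1 + deriv E (vp p * vm p)) * vm p + dminus φ p = 0)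
    (heom3 : ∀ p : ℝ × ℝ,
      (1 + deriv E (vp p * vm p)) * vp p + dplus φ p = 0)
    (Tpp Tmm Tpm : ℝ × ℝ → ℝ)
    (hTpp : Tpp = fun p => ((deriv E (vp p * vm p)) ^ 2 - 1) * vp p ^ 2)
    (hTmm : Tmm = fun p => ((deriv E (vp p * vm p)) ^ 2 - 1) * vm p ^ 2)
    (hTpm : Tpm = fun p =>
      2 * (deriv E (vp p * vm p) * (vp p * vm p) - E (vp p * vm p))) :
    (∀ p : ℝ × ℝ, dminus Tpp p + dplus Tpm p = 0) ∧
    (∀ p : ℝ × ℝ, dplus Tmm p + dminus Tpm p = 0) := by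
  -- unfold dplus/dminus in hypotheses
  simp only [dplus, dminus] at heom1 heom2 heom3 ⊢
  -- symmetry of second derivatives of φ
  have hsymm : ∀ p : ℝ × ℝ,
      fderiv ℝ (fun q => fderiv ℝ φ q ((1:ℝ), (0:ℝ))) p ((0:ℝ), (1:ℝ))
      = fderiv ℝ (fun q => fderiv ℝ φ q ((0:ℝ), (1:ℝ))) p ((1:ℝ), (0:ℝ)) := by
    intro p
    have hDφ : ContDiff ℝ 1 (fun q => fderiv ℝ φ q) := hφ.fderiv_right (by norm_num)
    have hH : HasFDerivAt (fun q => fderiv ℝ φ q)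
        (fderiv ℝ (fun q => fderiv ℝ φ q) p) p :=
      (hDφ.differentiable one_ne_zero p).hasFDerivAt
    have h1 : HasFDerivAt (fun q => fderiv ℝ φ q ((1:ℝ), (0:ℝ)))
        ((ContinuousLinearMap.apply ℝ ℝ ((1:ℝ), (0:ℝ))).comp
          (fderiv ℝ (fun q => fderiv ℝ φ q) p)) p :=
      (ContinuousLinearMap.apply ℝ ℝ ((1:ℝ), (0:ℝ))).hasFDerivAt.comp p hH
    have h2 : HasFDerivAt (fun q => fderiv ℝ φ q ((0:ℝ), (1:ℝ)))
        ((ContinuousLinearMap.apply ℝ ℝ ((0:ℝ), (1:ℝ))).comp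
          (fderiv ℝ (fun q => fderiv ℝ φ q) p)) p :=
      (ContinuousLinearMap.apply ℝ ℝ ((0:ℝ), (1:ℝ))).hasFDerivAt.comp p hH
    rw [h1.fderiv, h2.fderiv]
    exact second_derivative_symmetric
      (fun q => (hφ.differentiable (by norm_num) q).hasFDerivAt) hH _ _
  constructor
  · intro p
    have := aux_conserv E hE φ hφ vp vm hvp hvm ((1:ℝ), (0:ℝ)) ((0:ℝ), (1:ℝ))
      heom1 heom2 heom3 p
    rw [hTpp, hTpm]
    linarith [this]
  · intro p
    have hcomm : ∀ q : ℝ × ℝ, vm q * vp q = vp q * vm q := fun q => mul_comm _ _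
    have heom1' : ∀ p : ℝ × ℝ,
        fderiv ℝ (fun q => fderiv ℝ φ q ((1:ℝ), (0:ℝ))) p ((0:ℝ), (1:ℝ))
        + fderiv ℝ vm p ((1:ℝ), (0:ℝ)) + fderiv ℝ vp p ((0:ℝ), (1:ℝ)) = 0 := by
      intro q
      have := heom1 q
      rw [hsymm q]
      linarith
    have heom2' : ∀ p : ℝ × ℝ,
        (1 + deriv E (vm p * vp p)) * vp p + fderiv ℝ φ p ((1:ℝ), (0:ℝ)) = 0 := by
      intro q; rw [hcomm q]; exact heom3 q
    have heom3' : ∀ p : ℝ × ℝ,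
        (1 + deriv E (vm p * vp p)) * vm p + fderiv ℝ φ p ((0:ℝ), (1:ℝ)) = 0 := by
      intro q; rw [hcomm q]; exact heom2 q
    have key := aux_conserv E hE φ hφ vm vp hvm hvp ((0:ℝ), (1:ℝ)) ((1:ℝ), (0:ℝ))
      heom1' heom2' heom3' p
    have e1 : (fun q => ((deriv E (vm q * vp q)) ^ 2 - 1) * vm q ^ 2)
        = fun q => ((deriv E (vp q * vm q)) ^ 2 - 1) * vm q ^ 2 := by
      funext q; rw [hcomm q]
    have e2 : (fun q => 2 * (deriv E (vm q * vp q) * (vm q * vp q) - E (vm q * vp q)))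
        = fun q => 2 * (deriv E (vp q * vm q) * (vp q * vm q) - E (vp q * vm q)) := by
      funext q; rw [hcomm q]
    rw [e1, e2] at key
    rw [hTmm, hTpm]
    linarith [key]
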